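/- Let (Ω, 𝒜, μ) be a measure space and let W : Ω × {−1,1}^K → ℝ be such that for each a, x ↦ W(x,a) is measurable, W(x,a) ≥ 0 for all (x,a), and x ↦ Σ_a W(x,a) is μ-integrable. For a measurable rule D : Ω → {−1,1}^K define R01(D) = ∫ Σ_a W(x,a)·1{a ≠ D(x)} dμ(x) and RH(D) = ∫ Σ_a W(x,a)·(1/K)·Σ_{k=1}^K 1{a_k ≠ D_k(x)} dμ(x). Suppose that for μ-almost every x, c_k(W(x,·)) ≠ 0 for all k and the vector s(x) ∈ {−1,1}^K with s_k(x) = sign(c_k(W(x,·))) maximizes a ↦ W(x,a) over {−1,1}^K. Then every measurable rule f with RH(f) = inf over measurable rules D of RH(D) also satisfies R01(f) = inf over measurable rules D of R01(D). (Fisher consistency of outcome weighted Hamming loss, integrated form.) -/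

import Mathlib

open Finset

noncomputable section

/-- The cube `{-1,1}^K` as a finite set of real vectors. -/
def cube (K : ℕ) : Finset (Fin K → ℝ) :=
  Finset.univ.image (fun b : Fin K → Bool => fun k => if b k then 1 else -1)

lemma cube_nonempty (K : ℕ) : (cube K).Nonempty :=
  Finset.Nonempty.image Finset.univ_nonempty _

lemma univ_fin_nonempty {K : ℕ} (hK : 1 ≤ K) :
    (Finset.univ : Finset (Fin K)).Nonempty :=
  ⟨⟨0, hK⟩, Finset.mem_univ _⟩

/-- Outcome weighted 0-1 risk at a fixed covariate value:
`R01(d) = Σ_{a ∈ {-1,1}^K} w(a) · 1{a ≠ d}`. -/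
def R01 {K : ℕ} (w : (Fin K → ℝ) → ℝ) (d : Fin K → ℝ) : ℝ :=
  ∑ a ∈ cube K, w a * (if a = d then 0 else 1)

/-- Outcome weighted Hamming risk at a fixed covariate value:
`RH(d) = Σ_{a ∈ {-1,1}^K} w(a) · (1/K) Σ_k 1{a_k ≠ d_k}`. -/
def RH {K : ℕ} (w : (Fin K → ℝ) → ℝ) (d : Fin K → ℝ) : ℝ :=
  ∑ a ∈ cube K, w a * ((1 / (K : ℝ)) * ∑ k : Fin K, if a k = d k then 0 else 1)

/-- Contrast of treatment `k`:
`c_k(w) = Σ_{a : a_k = 1} w(a) - Σ_{a : a_k = -1} w(a)`. -/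
def contrast {K : ℕ} (w : (Fin K → ℝ) → ℝ) (k : Fin K) : ℝ :=
  ∑ a ∈ (cube K).filter (fun a => a k = 1), w a
    - ∑ a ∈ (cube K).filter (fun a => a k = -1), w a

open MeasureTheory

/-- Integrated outcome weighted 0-1 risk of a rule `D`. -/
def R01int {Ω : Type*} [MeasurableSpace Ω] (μ : Measure Ω) (K : ℕ)
    (W : Ω → (Fin K → ℝ) → ℝ) (D : Ω → Fin K → ℝ) : ℝ :=
  ∫ x, ∑ a ∈ cube K, W x a * (if a = D x then 0 else 1) ∂μ

/-- Integrated outcome weighted Hamming risk of a rule `D`. -/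
def RHint {Ω : Type*} [MeasurableSpace Ω] (μ : Measure Ω) (K : ℕ)
    (W : Ω → (Fin K → ℝ) → ℝ) (D : Ω → Fin K → ℝ) : ℝ :=
  ∫ x, ∑ a ∈ cube K,
    W x a * ((1 / (K : ℝ)) * ∑ k : Fin K, if a k = D x k then 0 else 1) ∂μ


section Helpers
variable {K : ℕ}

lemma mem_cube_pm {a : Fin K → ℝ} (ha : a ∈ cube K) (k : Fin K) :
    a k = 1 ∨ a k = -1 := by
  simp only [cube, Finset.mem_image, Finset.mem_univ, true_and] at ha
  obtain ⟨b, rfl⟩ := ha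
  by_cases hb : b k <;> simp [hb]

lemma mem_cube_of_pm {a : Fin K → ℝ} (h : ∀ k, a k = 1 ∨ a k = -1) :
    a ∈ cube K := by
  classical
  simp only [cube, Finset.mem_image, Finset.mem_univ, true_and]
  refine ⟨fun k => if a k = 1 then true else false, ?_⟩
  funext k
  rcases h k with hk | hk <;> norm_num [hk]

lemma contrast_eq (w : (Fin K → ℝ) → ℝ) (k : Fin K) :
    contrast w k = ∑ a ∈ cube K, w a * a k := by
  classical
  have h1 : ∑ a ∈ (cube K).filter (fun a => a k = 1), w a
      = ∑ a ∈ (cube K).filter (fun a => a k = 1), w a * a k := by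
    refine Finset.sum_congr rfl fun a ha => ?_
    rw [(Finset.mem_filter.mp ha).2, mul_one]
  have h2 : (cube K).filter (fun a => ¬ a k = 1) = (cube K).filter (fun a => a k = -1) := by
    refine Finset.filter_congr fun a ha => ?_
    rcases mem_cube_pm ha k with h | h <;> simp [h] <;> norm_num
  have h3 : ∑ a ∈ (cube K).filter (fun a => a k = -1), w a
      = - ∑ a ∈ (cube K).filter (fun a => ¬ a k = 1), w a * a k := by
    rw [h2, ← Finset.sum_neg_distrib]
    refine Finset.sum_congr rfl fun a ha => ?_
    rw [(Finset.mem_filter.mp ha).2]; ring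
  rw [contrast, h1, h3,
    ← Finset.sum_filter_add_sum_filter_not (cube K) (fun a => a k = 1) (fun a => w a * a k)]
  ring

lemma sum_ind_eq (w : (Fin K → ℝ) → ℝ) {d : Fin K → ℝ} (hd : d ∈ cube K) (k : Fin K) :
    ∑ a ∈ cube K, w a * (if a k = d k then (0:ℝ) else 1)
      = ((∑ a ∈ cube K, w a) - d k * contrast w k) / 2 := by
  have h : ∀ a ∈ cube K, w a * (if a k = d k then (0:ℝ) else 1)
      = (w a - d k * (w a * a k)) / 2 := by
    intro a ha
    rcases mem_cube_pm ha k with h1 | h1 <;> rcases mem_cube_pm hd k with h2 | h2 <;>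
      rw [h1, h2] <;> norm_num
  rw [Finset.sum_congr rfl h, ← Finset.sum_div, Finset.sum_sub_distrib,
    ← Finset.mul_sum, contrast_eq]

lemma RH_eq (w : (Fin K → ℝ) → ℝ) {d : Fin K → ℝ} (hd : d ∈ cube K) :
    RH w d = (1 / (K:ℝ)) * ∑ k : Fin K,
      ((∑ a ∈ cube K, w a) - d k * contrast w k) / 2 := by
  unfold RH
  have h2 : ∀ k ∈ (Finset.univ : Finset (Fin K)),
      ((∑ a ∈ cube K, w a) - d k * contrast w k) / 2
        = ∑ a ∈ cube K, w a * (if a k = d k then (0:ℝ) else 1) :=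
    fun k _ => (sum_ind_eq w hd k).symm
  rw [Finset.sum_congr rfl h2, Finset.sum_comm, Finset.mul_sum]
  refine Finset.sum_congr rfl fun a _ => ?_
  simp only [Finset.mul_sum]
  exact Finset.sum_congr rfl fun k _ => by ring

lemma R01_eq (w : (Fin K → ℝ) → ℝ) {d : Fin K → ℝ} (hd : d ∈ cube K) :
    R01 w d = (∑ a ∈ cube K, w a) - w d := by
  classical
  unfold R01
  have h : ∀ a ∈ cube K, w a * (if a = d then (0:ℝ) else 1)
      = w a - (if a = d then w a else 0) := by
    intro a _; by_cases hh : a = d <;> simp [hh]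
  rw [Finset.sum_congr rfl h, Finset.sum_sub_distrib,
    Finset.sum_ite_eq' (cube K) d w, if_pos hd]

lemma RH_min (hK : 1 ≤ K) (w : (Fin K → ℝ) → ℝ) {d : Fin K → ℝ} (hd : d ∈ cube K) :
    RH w (fun k => if 0 < contrast w k then 1 else -1) ≤ RH w d := by
  have hs : (fun k => if 0 < contrast w k then (1:ℝ) else -1) ∈ cube K :=
    mem_cube_of_pm fun k => by by_cases h : 0 < contrast w k <;> simp [h]
  rw [RH_eq w hd, RH_eq w hs]
  have hKpos : 0 < (1/(K:ℝ)) := by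
    have : (0:ℝ) < K := by exact_mod_cast hK
    positivity
  refine mul_le_mul_of_nonneg_left (Finset.sum_le_sum fun k _ => ?_) hKpos.le
  have hdk := mem_cube_pm hd k
  have key : d k * contrast w k ≤ (if 0 < contrast w k then (1:ℝ) else -1) * contrast w k := by
    rcases hdk with h1 | h1 <;> by_cases h : 0 < contrast w k <;> simp [h1, h] <;> linarith
  linarith

lemma RH_unique (hK : 1 ≤ K) (w : (Fin K → ℝ) → ℝ) {d : Fin K → ℝ} (hd : d ∈ cube K)
    (hc : ∀ k, contrast w k ≠ 0)
    (heq : RH w d ≤ RH w (fun k => if 0 < contrast w k then (1:ℝ) else -1)) :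
    d = fun k => if 0 < contrast w k then (1:ℝ) else -1 := by
  have hs : (fun k => if 0 < contrast w k then (1:ℝ) else -1) ∈ cube K :=
    mem_cube_of_pm fun k => by by_cases h : 0 < contrast w k <;> simp [h]
  have hKpos : 0 < (1/(K:ℝ)) := by
    have : (0:ℝ) < K := by exact_mod_cast hK
    positivity
  rw [RH_eq w hd, RH_eq w hs] at heq
  have heq' : ∑ k : Fin K, ((∑ a ∈ cube K, w a) - d k * contrast w k) / 2
      ≤ ∑ k : Fin K, ((∑ a ∈ cube K, w a)
        - (if 0 < contrast w k then (1:ℝ) else -1) * contrast w k) / 2 :=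
    (mul_le_mul_iff_right₀ hKpos).mp heq
  have hle : ∀ k ∈ (Finset.univ : Finset (Fin K)),
      ((∑ a ∈ cube K, w a) - (if 0 < contrast w k then (1:ℝ) else -1) * contrast w k) / 2
        ≤ ((∑ a ∈ cube K, w a) - d k * contrast w k) / 2 := by
    intro k _
    have hdk := mem_cube_pm hd k
    have key : d k * contrast w k ≤ (if 0 < contrast w k then (1:ℝ) else -1) * contrast w k := by
      rcases hdk with h1 | h1 <;> by_cases h : 0 < contrast w k <;> simp [h1, h] <;> linarith
    linarith
  have hsum := le_antisymm (Finset.sum_le_sum hle) heq'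
  have hterm := (Finset.sum_eq_sum_iff_of_le hle).mp hsum
  funext k
  have h := (hterm k (Finset.mem_univ k)).symm
  have h2 : d k * contrast w k = (if 0 < contrast w k then (1:ℝ) else -1) * contrast w k := by
    linarith
  exact mul_right_cancel₀ (hc k) h2

lemma measurable_contrast {Ω : Type*} [MeasurableSpace Ω] (W : Ω → (Fin K → ℝ) → ℝ)
    (hW : ∀ a ∈ cube K, Measurable (fun x => W x a)) (k : Fin K) :
    Measurable (fun x => contrast (W x) k) := by
  simp only [contrast]
  apply Measurable.sub <;> apply Finset.measurable_sum <;> intro a ha <;>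
    exact hW a (Finset.mem_filter.mp ha).1

lemma measurable_R01 {Ω : Type*} [MeasurableSpace Ω] (W : Ω → (Fin K → ℝ) → ℝ)
    (hW : ∀ a ∈ cube K, Measurable (fun x => W x a))
    {D : Ω → Fin K → ℝ} (hD : Measurable D) :
    Measurable (fun x => R01 (W x) (D x)) := by
  unfold R01
  apply Finset.measurable_sum
  intro a ha
  refine (hW a ha).mul (Measurable.ite ?_ measurable_const measurable_const)
  have : {x : Ω | a = D x} = D ⁻¹' {a} := by ext x; simp [eq_comm]
  rw [this]
  exact hD (measurableSet_singleton a)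

lemma measurable_RH {Ω : Type*} [MeasurableSpace Ω] (W : Ω → (Fin K → ℝ) → ℝ)
    (hW : ∀ a ∈ cube K, Measurable (fun x => W x a))
    {D : Ω → Fin K → ℝ} (hD : Measurable D) :
    Measurable (fun x => RH (W x) (D x)) := by
  unfold RH
  apply Finset.measurable_sum
  intro a ha
  refine (hW a ha).mul (measurable_const.mul ?_)
  apply Finset.measurable_sum
  intro k _
  refine Measurable.ite ?_ measurable_const measurable_const
  have : {x : Ω | a k = D x k} = (fun x => D x k) ⁻¹' {a k} := by ext x; simp [eq_comm]
  rw [this]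
  exact ((measurable_pi_apply k).comp hD) (measurableSet_singleton (a k))

lemma R01_bounds (w : (Fin K → ℝ) → ℝ) (hw : ∀ a ∈ cube K, 0 ≤ w a)
    (d : Fin K → ℝ) : 0 ≤ R01 w d ∧ R01 w d ≤ ∑ a ∈ cube K, w a := by
  constructor
  · refine Finset.sum_nonneg fun a ha => mul_nonneg (hw a ha) ?_
    split <;> norm_num
  · refine Finset.sum_le_sum fun a ha => ?_
    refine mul_le_of_le_one_right (hw a ha) ?_
    split <;> norm_num

lemma RH_bounds (hK : 1 ≤ K) (w : (Fin K → ℝ) → ℝ) (hw : ∀ a ∈ cube K, 0 ≤ w a)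
    (d : Fin K → ℝ) : 0 ≤ RH w d ∧ RH w d ≤ ∑ a ∈ cube K, w a := by
  have hfac : ∀ a : Fin K → ℝ,
      0 ≤ (1/(K:ℝ)) * ∑ k : Fin K, (if a k = d k then (0:ℝ) else 1) ∧
      (1/(K:ℝ)) * ∑ k : Fin K, (if a k = d k then (0:ℝ) else 1) ≤ 1 := by
    intro a
    have hKpos : (0:ℝ) < K := by exact_mod_cast hK
    have h0 : 0 ≤ ∑ k : Fin K, (if a k = d k then (0:ℝ) else 1) :=
      Finset.sum_nonneg fun k _ => by split <;> norm_num
    have h1 : ∑ k : Fin K, (if a k = d k then (0:ℝ) else 1) ≤ K := by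
      calc ∑ k : Fin K, (if a k = d k then (0:ℝ) else 1)
          ≤ ∑ k : Fin K, (1:ℝ) := Finset.sum_le_sum fun k _ => by split <;> norm_num
        _ = K := by simp
    constructor
    · positivity
    · rw [mul_comm, ← le_div_iff₀ (by positivity), one_div_one_div]; exact h1
  constructor
  · exact Finset.sum_nonneg fun a ha => mul_nonneg (hw a ha) (hfac a).1
  · exact Finset.sum_le_sum fun a ha => mul_le_of_le_one_right (hw a ha) (hfac a).2

lemma integrable_of_bounds {Ω : Type*} [MeasurableSpace Ω] {μ : Measure Ω}
    {S g : Ω → ℝ} (hS : Integrable S μ) (hg : Measurable g)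
    (h0 : ∀ x, 0 ≤ g x) (h1 : ∀ x, g x ≤ S x) : Integrable g μ :=
  hS.mono hg.aestronglyMeasurable (ae_of_all _ fun x => by
    rw [Real.norm_eq_abs, Real.norm_eq_abs, abs_of_nonneg (h0 x)]
    exact (h1 x).trans (le_abs_self _))

end Helpers

/-- Fisher consistency of the outcome weighted Hamming loss (integrated form
of Theorem 1). -/
theorem fisher_consistency_hamming_integrated
    {Ω : Type*} [MeasurableSpace Ω] (μ : Measure Ω)
    (K : ℕ) (hK : 1 ≤ K) (W : Ω → (Fin K → ℝ) → ℝ)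
    (hWmeas : ∀ a ∈ cube K, Measurable (fun x => W x a))
    (hWnonneg : ∀ x, ∀ a ∈ cube K, 0 ≤ W x a)
    (hWint : Integrable (fun x => ∑ a ∈ cube K, W x a) μ)
    (hae : ∀ᵐ x ∂μ, (∀ k : Fin K, contrast (W x) k ≠ 0) ∧
      ∀ a ∈ cube K, W x a ≤ W x (fun k => Real.sign (contrast (W x) k)))
    (f : Ω → Fin K → ℝ) (hfmeas : Measurable f) (hfcube : ∀ x, f x ∈ cube K)
    (hfmin : ∀ D : Ω → Fin K → ℝ, Measurable D → (∀ x, D x ∈ cube K) →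
      RHint μ K W f ≤ RHint μ K W D) :
    ∀ D : Ω → Fin K → ℝ, Measurable D → (∀ x, D x ∈ cube K) →
      R01int μ K W f ≤ R01int μ K W D := by
  intro D hDmeas hDcube
  classical
  set s : Ω → Fin K → ℝ := fun x k => if 0 < contrast (W x) k then 1 else -1 with hs_def
  have hscube : ∀ x, s x ∈ cube K := fun x => mem_cube_of_pm fun k => by
    by_cases h : 0 < contrast (W x) k <;> simp [s, h]
  have hsmeas : Measurable s := by
    apply measurable_pi_lambda
    intro k
    exact Measurable.ite
      (measurableSet_lt measurable_const (measurable_contrast W hWmeas k))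
      measurable_const measurable_const
  -- integrability
  have intRH : ∀ (E : Ω → Fin K → ℝ), Measurable E →
      Integrable (fun x => RH (W x) (E x)) μ := fun E hE =>
    integrable_of_bounds hWint (measurable_RH W hWmeas hE)
      (fun x => (RH_bounds hK (W x) (hWnonneg x) (E x)).1)
      (fun x => (RH_bounds hK (W x) (hWnonneg x) (E x)).2)
  have intR01 : ∀ (E : Ω → Fin K → ℝ), Measurable E →
      Integrable (fun x => R01 (W x) (E x)) μ := fun E hE =>
    integrable_of_bounds hWint (measurable_R01 W hWmeas hE)
      (fun x => (R01_bounds (W x) (hWnonneg x) (E x)).1)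
      (fun x => (R01_bounds (W x) (hWnonneg x) (E x)).2)
  -- RHint as integrals of RH
  have hRHint : ∀ (E : Ω → Fin K → ℝ), RHint μ K W E = ∫ x, RH (W x) (E x) ∂μ :=
    fun E => rfl
  have hR01int : ∀ (E : Ω → Fin K → ℝ), R01int μ K W E = ∫ x, R01 (W x) (E x) ∂μ :=
    fun E => rfl
  have h1 : RHint μ K W f ≤ RHint μ K W s := hfmin s hsmeas hscube
  have h2 : RHint μ K W s ≤ RHint μ K W f := by
    rw [hRHint, hRHint]
    exact integral_mono (intRH s hsmeas) (intRH f hfmeas)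
      (fun x => RH_min hK (W x) (hfcube x))
  -- a.e. equality of RH integrands
  have hzero : ∫ x, (RH (W x) (f x) - RH (W x) (s x)) ∂μ = 0 := by
    rw [integral_sub (intRH f hfmeas) (intRH s hsmeas)]
    have := le_antisymm h1 h2
    rw [hRHint, hRHint] at this
    linarith [this]
  have haeRH : (fun x => RH (W x) (f x) - RH (W x) (s x)) =ᵐ[μ] 0 := by
    rw [← integral_eq_zero_iff_of_nonneg
      (fun x => sub_nonneg.2 (RH_min hK (W x) (hfcube x)))
      ((intRH f hfmeas).sub (intRH s hsmeas))]
    exact hzero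
  -- a.e., f = s
  have hfs : ∀ᵐ x ∂μ, (∀ k, contrast (W x) k ≠ 0) →
      f x = s x := by
    filter_upwards [haeRH] with x hx hc
    have hle : RH (W x) (f x) ≤ RH (W x) (s x) := by
      have : RH (W x) (f x) - RH (W x) (s x) = 0 := hx
      linarith
    exact RH_unique hK (W x) (hfcube x) hc hle
  -- conclude
  rw [hR01int, hR01int]
  apply integral_mono_ae (intR01 f hfmeas) (intR01 D hDmeas)
  filter_upwards [hfs, hae] with x hx ⟨hc, hmax⟩
  have hfx : f x = s x := hx hc
  have hsign : (fun k => Real.sign (contrast (W x) k)) = s x := by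
    funext k
    by_cases h : 0 < contrast (W x) k
    · simp [s, h, Real.sign_of_pos h]
    · have hneg : contrast (W x) k < 0 := lt_of_le_of_ne (not_lt.mp h) (hc k)
      simp [s, h, Real.sign_of_neg hneg]
  have hW1 : W x (D x) ≤ W x (s x) := by
    rw [← hsign]; exact hmax (D x) (hDcube x)
  rw [hfx, R01_eq (W x) (hscube x), R01_eq (W x) (hDcube x)]
  linarith
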